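/- Let I ≥ 2, let E^s_1 > E^s_2 > … > E^s_I be real sampling points, let v_1, …, v_I be reals, for i ∈ {1,…,I−1} let s_i = (v_i − v_{i+1})/(E^s_i − E^s_{i+1}), and define V̂(E) = min over i ∈ {1,…,I−1} of ( v_i + s_i · (E − E^s_i) ); assume the slopes are monotone, s_1 ≤ s_2 ≤ … ≤ s_{I−1} (concavity of the samples). Fix i ∈ {1,…,I−1} and set C = s_i. Then for every δ with 0 ≤ δ ≤ E^s_i − E^s_{i+1}, V̂(E^s_i − δ) = v_i − C·δ. Consequently, for any set P, any functions O : P → ℝ and Δ : P → ℝ with 0 ≤ Δ(p) ≤ E^s_i − E^s_{i+1} for all p ∈ P, and any γ ≥ 0, the function p ↦ O(p) + γ·V̂(E^s_i − Δ(p)) is identically equal on P to the linear-degradation-cost objective p ↦ O(p) + γ·(v_i − C·Δ(p)); in particular the two objectives have the same supremum and the same set of maximizers over P. -/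
import Mathlib


/-- On segment `i` of the concave piecewise linear value function, the
approximation is exactly linear with slope equal to the marginal degradation
cost `C = s i`. Consequently, replacing the piecewise linear value function by
the linear-degradation-cost objective with marginal cost `C` yields an
identical objective on any decision set whose daily degradation does not
exceed the segment width; in particular both objectives have the same
supremum and the same set of maximizers. -/
theorem marginal_degradation_cost_objective_equivalence
    (I : ℕ) (hI : 2 ≤ I)
    (Es : ℕ → ℝ)
    (hEs : ∀ k : ℕ, k + 1 < I → Es (k + 1) < Es k)
    (v : ℕ → ℝ)
    (s : ℕ → ℝ)
    (hs : ∀ k : ℕ, s k = (v k - v (k + 1)) / (Es k - Es (k + 1)))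
    (hsmono : ∀ k : ℕ, k + 2 < I → s k ≤ s (k + 1))
    (Vhat : ℝ → ℝ)
    (hVhat : ∀ E : ℝ, Vhat E =
      sInf {y : ℝ | ∃ k : ℕ, k + 1 < I ∧ y = v k + s k * (E - Es k)})
    (i : ℕ) (hi : i + 1 < I)
    (Cm : ℝ) (hCm : Cm = s i) :
    (∀ δ : ℝ, 0 ≤ δ → δ ≤ Es i - Es (i + 1) →
      Vhat (Es i - δ) = v i - Cm * δ) ∧
    (∀ (P : Type) (O Δ : P → ℝ),
      (∀ p : P, 0 ≤ Δ p ∧ Δ p ≤ Es i - Es (i + 1)) →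
      ∀ γ : ℝ, 0 ≤ γ →
        (∀ p : P, O p + γ * Vhat (Es i - Δ p) = O p + γ * (v i - Cm * Δ p)) ∧
        sSup {y : ℝ | ∃ p : P, y = O p + γ * Vhat (Es i - Δ p)} =
          sSup {y : ℝ | ∃ p : P, y = O p + γ * (v i - Cm * Δ p)} ∧
        {p : P | ∀ q : P, O q + γ * Vhat (Es i - Δ q) ≤ O p + γ * Vhat (Es i - Δ p)} =
          {p : P | ∀ q : P, O q + γ * (v i - Cm * Δ q) ≤ O p + γ * (v i - Cm * Δ p)}) := by
  have hEsmono : ∀ n m : ℕ, n ≤ m → m < I → Es m ≤ Es n := by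
    intro n m h hm
    induction m with
    | zero => simp_all
    | succ m ih =>
      rcases Nat.lt_or_ge n (m + 1) with h' | h'
      · have h1 : Es (m + 1) < Es m := hEs m hm
        exact h1.le.trans (ih (Nat.lt_succ_iff.mp h') (by omega))
      · have : n = m + 1 := le_antisymm h h'
        simp [this]
  have key : ∀ δ : ℝ, 0 ≤ δ → δ ≤ Es i - Es (i + 1) →
      Vhat (Es i - δ) = v i - Cm * δ := by
    intro δ h0 h1
    set E : ℝ := Es i - δ with hE
    set f : ℕ → ℝ := fun k => v k + s k * (E - Es k) with hf
    have hwidth : Es (i + 1) < Es i := hEs i hi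
    have hEle : Es (i + 1) ≤ E := by rw [hE]; linarith
    have hEge : E ≤ Es i := by rw [hE]; linarith
    have hline : ∀ m : ℕ, m + 1 < I → f m = v (m + 1) + s m * (E - Es (m + 1)) := by
      intro m hm
      have hd : Es (m + 1) < Es m := hEs m hm
      have hprod : s m * (Es m - Es (m + 1)) = v m - v (m + 1) := by
        rw [hs m]
        exact div_mul_cancel₀ _ (sub_ne_zero.mpr hd.ne')
      simp only [hf]; nlinarith [hprod]
    have step : ∀ m : ℕ, m + 2 < I →
        f m - f (m + 1) = (s m - s (m + 1)) * (E - Es (m + 1)) := by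
      intro m hm
      rw [hline m (by omega)]
      simp only [hf]; ring
    -- lower bound on the left part (k ≤ i)
    have down : ∀ k : ℕ, k ≤ i → f i ≤ f (i - k) := by
      intro k hk
      induction k with
      | zero => simp
      | succ k ih =>
        have hk' : k ≤ i := by omega
        have ih' := ih hk'
        have hm : i - (k + 1) + 1 = i - k := by omega
        have hstep := step (i - (k + 1)) (by omega)
        rw [hm] at hstep
        have hsle : s (i - (k + 1)) ≤ s (i - k) := by
          have := hsmono (i - (k + 1)) (by omega)
          rwa [show i - (k + 1) + 1 = i - k by omega] at this
        have hEle2 : E ≤ Es (i - k) := hEge.trans (hEsmono (i - k) i (by omega) (by omega))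
        nlinarith [hstep, ih']
    have up : ∀ k : ℕ, i ≤ k → k + 1 < I → f i ≤ f k := by
      intro k
      induction k with
      | zero => intro h _; simp [Nat.le_zero.mp h]
      | succ k ih =>
        intro h hk
        rcases Nat.lt_or_ge i (k + 1) with h' | h'
        · have hik : i ≤ k := by omega
          have ih' := ih hik (by omega)
          have hstep := step k (by omega)
          have hsle : s k ≤ s (k + 1) := hsmono k (by omega)
          have hEge2 : Es (k + 1) ≤ E := (hEsmono (i + 1) (k + 1) (by omega) (by omega)).trans hEle
          nlinarith [hstep, ih']
        · have : i = k + 1 := le_antisymm h h'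
          simp [this]
    have lb : ∀ k : ℕ, k + 1 < I → f i ≤ f k := by
      intro k hk
      rcases le_or_gt k i with h | h
      · have := down (i - k) (by omega)
        rwa [show i - (i - k) = k by omega] at this
      · exact up k h.le hk
    rw [hVhat]
    have hmem : f i ∈ {y : ℝ | ∃ k : ℕ, k + 1 < I ∧ y = v k + s k * (E - Es k)} :=
      ⟨i, hi, rfl⟩
    have hlbset : ∀ y ∈ {y : ℝ | ∃ k : ℕ, k + 1 < I ∧ y = v k + s k * (E - Es k)}, f i ≤ y := by
      rintro y ⟨k, hk, rfl⟩
      exact lb k hk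
    have : sInf {y : ℝ | ∃ k : ℕ, k + 1 < I ∧ y = v k + s k * (E - Es k)} = f i :=
      le_antisymm (csInf_le ⟨f i, hlbset⟩ hmem) (le_csInf ⟨f i, hmem⟩ hlbset)
    rw [this]
    simp only [hf, hE, hCm]; ring
  refine ⟨key, ?_⟩
  intro P O Δ hΔ γ hγ
  have heq : ∀ p : P, O p + γ * Vhat (Es i - Δ p) = O p + γ * (v i - Cm * Δ p) := by
    intro p
    rw [key (Δ p) (hΔ p).1 (hΔ p).2]
  refine ⟨heq, ?_, ?_⟩
  · congr 1
    ext y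
    constructor
    · rintro ⟨p, rfl⟩; exact ⟨p, by rw [heq p]⟩
    · rintro ⟨p, rfl⟩; exact ⟨p, by rw [heq p]⟩
  · ext p
    simp only [Set.mem_setOf_eq, heq]
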